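/- Let V be a multiplicative unitary of multiplicity 1 on a finite-dimensional Hilbert space H, and let f, g be pre-subgroups with g ≺ f. Then L_g f = ⟨g,f⟩·g and ⟨g,e⟩ = ⟨g,f⟩·⟨f,e⟩, where L_g = L(ω_{g,g}). -/

import Mathlib

open scoped InnerProductSpace ComplexOrder

noncomputable section

namespace MU

variable {ι : Type*} [Fintype ι] [DecidableEq ι]

/-- The elementary tensor `f ⊗ g` of two vectors, in the model
`H ⊗ H = EuclideanSpace ℂ (ι × ι)`. -/
def tens (f g : EuclideanSpace ℂ ι) : EuclideanSpace ℂ (ι × ι) :=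
  WithLp.toLp 2 fun p => f p.1 * g p.2

/-- `g ↦ f ⊗ g` as a linear map. -/
def tensL (f : EuclideanSpace ℂ ι) :
    EuclideanSpace ℂ ι →ₗ[ℂ] EuclideanSpace ℂ (ι × ι) where
  toFun g := tens f g
  map_add' x y := PiLp.ext fun p => by
    show f p.1 * (x + y) p.2 = f p.1 * x p.2 + f p.1 * y p.2
    rw [PiLp.add_apply]; ring
  map_smul' c x := PiLp.ext fun p => by
    show f p.1 * (c • x) p.2 = (c • (tens f x : EuclideanSpace ℂ (ι × ι))) p
    rw [PiLp.smul_apply, PiLp.smul_apply, smul_eq_mul, smul_eq_mul]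
    show f p.1 * (c * x p.2) = c * (f p.1 * x p.2)
    ring

/-- `f ↦ f ⊗ g` as a linear map. -/
def tensR (g : EuclideanSpace ℂ ι) :
    EuclideanSpace ℂ ι →ₗ[ℂ] EuclideanSpace ℂ (ι × ι) where
  toFun f := tens f g
  map_add' x y := PiLp.ext fun p => by
    show (x + y) p.1 * g p.2 = x p.1 * g p.2 + y p.1 * g p.2
    rw [PiLp.add_apply]; ring
  map_smul' c x := PiLp.ext fun p => by
    show (c • x) p.1 * g p.2 = (c • (tens x g : EuclideanSpace ℂ (ι × ι))) p
    rw [PiLp.smul_apply, PiLp.smul_apply, smul_eq_mul, smul_eq_mul]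
    show (c * x p.1) * g p.2 = c * (x p.1 * g p.2)
    ring

/-- Action of a matrix on a Euclidean space vector. -/
def appM {κ : Type*} [Fintype κ] (M : Matrix κ κ ℂ) (v : EuclideanSpace ℂ κ) :
    EuclideanSpace ℂ κ :=
  WithLp.toLp 2 fun i => ∑ j, M i j * v j

/-- Action of a matrix as a linear map on the Euclidean space. -/
def mact {κ : Type*} [Fintype κ] (M : Matrix κ κ ℂ) :
    EuclideanSpace ℂ κ →ₗ[ℂ] EuclideanSpace ℂ κ where
  toFun := appM M
  map_add' x y := PiLp.ext fun i => by
    show ∑ j, M i j * (x + y) j = (appM M x + appM M y) i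
    rw [PiLp.add_apply]
    show ∑ j, M i j * (x + y) j = (∑ j, M i j * x j) + ∑ j, M i j * y j
    rw [← Finset.sum_add_distrib]
    refine Finset.sum_congr rfl fun j _ => ?_
    rw [PiLp.add_apply]; ring
  map_smul' c x := PiLp.ext fun i => by
    show ∑ j, M i j * (c • x) j = (c • appM M x) i
    rw [PiLp.smul_apply, smul_eq_mul]
    show ∑ j, M i j * (c • x) j = c * ∑ j, M i j * x j
    rw [Finset.mul_sum]
    refine Finset.sum_congr rfl fun j _ => ?_
    rw [PiLp.smul_apply, smul_eq_mul]; ring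

/-- The leg `V₁₂` on `H ⊗ H ⊗ H`. -/
def leg12 (V : Matrix (ι × ι) (ι × ι) ℂ) : Matrix (ι × ι × ι) (ι × ι × ι) ℂ :=
  fun p q => V (p.1, p.2.1) (q.1, q.2.1) * (if p.2.2 = q.2.2 then 1 else 0)

/-- The leg `V₁₃` on `H ⊗ H ⊗ H`. -/
def leg13 (V : Matrix (ι × ι) (ι × ι) ℂ) : Matrix (ι × ι × ι) (ι × ι × ι) ℂ :=
  fun p q => V (p.1, p.2.2) (q.1, q.2.2) * (if p.2.1 = q.2.1 then 1 else 0)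

/-- The leg `V₂₃` on `H ⊗ H ⊗ H`. -/
def leg23 (V : Matrix (ι × ι) (ι × ι) ℂ) : Matrix (ι × ι × ι) (ι × ι × ι) ℂ :=
  fun p q => V (p.2.1, p.2.2) (q.2.1, q.2.2) * (if p.1 = q.1 then 1 else 0)

/-- The pentagon equation `V₁₂ V₁₃ V₂₃ = V₂₃ V₁₂`. -/
def Pentagon (V : Matrix (ι × ι) (ι × ι) ℂ) : Prop :=
  leg12 V * leg13 V * leg23 V = leg23 V * leg12 V

/-- `V` is a multiplicative unitary: a unitary satisfying the pentagon equation. -/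
def IsMU (V : Matrix (ι × ι) (ι × ι) ℂ) : Prop :=
  V * V.conjTranspose = 1 ∧ V.conjTranspose * V = 1 ∧ Pentagon V

/-- `ξ` is a fixed vector for `V`. -/
def Fixed (V : Matrix (ι × ι) (ι × ι) ℂ) (ξ : EuclideanSpace ℂ ι) : Prop :=
  ∀ η, mact V (tens ξ η) = tens ξ η

/-- `ξ` is a cofixed vector for `V`. -/
def Cofixed (V : Matrix (ι × ι) (ι × ι) ℂ) (ξ : EuclideanSpace ℂ ι) : Prop :=
  ∀ η, mact V (tens η ξ) = tens η ξ

/-- `V` has multiplicity 1, with fixed unit vector `e` and cofixed unit vector `eHat`. -/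
def Mult1 (V : Matrix (ι × ι) (ι × ι) ℂ) (e eHat : EuclideanSpace ℂ ι) : Prop :=
  ‖e‖ = 1 ∧ ‖eHat‖ = 1 ∧ Fixed V e ∧ Cofixed V eHat ∧
    (∀ ξ, Fixed V ξ → ∃ c : ℂ, ξ = c • e) ∧
    (∀ ξ, Cofixed V ξ → ∃ c : ℂ, ξ = c • eHat)

/-- A pre-subgroup of `V` (with fixed vector `e`): a unit vector `f` with
`⟨f,e⟩ > 0` and `V(f⊗f) = f⊗f`. -/
def IsPreSubgroup (V : Matrix (ι × ι) (ι × ι) ℂ) (e f : EuclideanSpace ℂ ι) : Prop :=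
  ‖f‖ = 1 ∧ 0 < ⟪f, e⟫_ℂ ∧ mact V (tens f f) = tens f f

/-- The subspace `H^f = {η : V(f⊗η) = f⊗η}`. -/
def subUp (V : Matrix (ι × ι) (ι × ι) ℂ) (f : EuclideanSpace ℂ ι) :
    Submodule ℂ (EuclideanSpace ℂ ι) :=
  LinearMap.ker ((mact V).comp (tensL f) - tensL f)

/-- The subspace `H_f = {η : V(η⊗f) = η⊗f}`. -/
def subDown (V : Matrix (ι × ι) (ι × ι) ℂ) (f : EuclideanSpace ℂ ι) :
    Submodule ℂ (EuclideanSpace ℂ ι) :=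
  LinearMap.ker ((mact V).comp (tensR f) - tensR f)

/-- The slice `L(ω_{ξ,η}) = (ω_{ξ,η} ⊗ id)(V)`. -/
def Lslice (V : Matrix (ι × ι) (ι × ι) ℂ) (ξ η : EuclideanSpace ℂ ι) : Matrix ι ι ℂ :=
  fun a b => ∑ x, ∑ y, (starRingEnd ℂ) (ξ x) * η y * V (x, a) (y, b)

/-- The slice `ρ(ω_{ξ,η}) = (id ⊗ ω_{ξ,η})(V)`. -/
def Rslice (V : Matrix (ι × ι) (ι × ι) ℂ) (ξ η : EuclideanSpace ℂ ι) : Matrix ι ι ℂ :=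
  fun a b => ∑ x, ∑ y, (starRingEnd ℂ) (ξ x) * η y * V (a, x) (b, y)

/-- The slice `L(ω) = (ω ⊗ id)(V)` of a general linear functional `ω` on `L(H)`. -/
def LslF (V : Matrix (ι × ι) (ι × ι) ℂ) (ω : Matrix ι ι ℂ →ₗ[ℂ] ℂ) : Matrix ι ι ℂ :=
  fun a b => ω (fun x y => V (x, a) (y, b))

/-- A state on `L(H)`: a unital positive linear functional. -/
def IsState (ω : Matrix ι ι ℂ →ₗ[ℂ] ℂ) : Prop :=
  ω 1 = 1 ∧ ∀ M : Matrix ι ι ℂ, M.PosSemidef → ∃ r : ℝ, 0 ≤ r ∧ ω M = r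


/-! ### Auxiliary infrastructure -/

section Aux

local notation "cj" => starRingEnd ℂ

variable {κ : Type*} [Fintype κ]

/-- Plain sesquilinear form on functions. -/
def ip (x y : κ → ℂ) : ℂ := ∑ i, (starRingEnd ℂ) (x i) * y i

lemma ip_conj (x y : κ → ℂ) : cj (ip x y) = ip y x := by
  simp only [ip, map_sum, map_mul, RingHomCompTriple.comp_apply, RingHom.id_apply,
    Complex.conj_conj]
  exact Finset.sum_congr rfl fun i _ => by ring

lemma inner_eq_ip (x y : EuclideanSpace ℂ κ) : ⟪x, y⟫_ℂ = ip x y := by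
  simp [ip, PiLp.inner_apply, RCLike.inner_apply, mul_comm]

lemma cfun {x y : EuclideanSpace ℂ κ} (h : x = y) (i : κ) : x i = y i := by rw [h]

lemma ip_self_normSq (x : κ → ℂ) : ip x x = ((∑ i, Complex.normSq (x i) : ℝ) : ℂ) := by
  rw [ip]
  push_cast
  exact Finset.sum_congr rfl fun i _ => (Complex.normSq_eq_conj_mul_self).symm ▸ rfl

lemma ip_self_eq_zero {x : κ → ℂ} (h : ip x x = 0) : ∀ i, x i = 0 := by
  rw [ip_self_normSq] at h
  have h' : (∑ i, Complex.normSq (x i) : ℝ) = 0 := by exact_mod_cast h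
  intro i
  have := (Finset.sum_eq_zero_iff_of_nonneg (fun j _ => Complex.normSq_nonneg (x j))).mp h' i
    (Finset.mem_univ i)
  exact Complex.normSq_eq_zero.mp this

lemma appM_apply (M : Matrix κ κ ℂ) (v : EuclideanSpace ℂ κ) (i : κ) :
    appM M v i = ∑ j, M i j * v j := rfl

lemma appM_mul (A B : Matrix κ κ ℂ) (v : EuclideanSpace ℂ κ) :
    appM (A * B) v = appM A (appM B v) := by
  refine PiLp.ext fun i => ?_
  show ∑ j, (A * B) i j * v j = ∑ j, A i j * appM B v j
  simp only [Matrix.mul_apply, appM_apply, Finset.sum_mul, Finset.mul_sum]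
  rw [Finset.sum_comm]
  exact Finset.sum_congr rfl fun j _ => Finset.sum_congr rfl fun l _ => by ring

lemma appM_one (v : EuclideanSpace ℂ κ) [DecidableEq κ] : appM (1 : Matrix κ κ ℂ) v = v := by
  refine PiLp.ext fun i => ?_
  show ∑ j, (1 : Matrix κ κ ℂ) i j * v j = v i
  simp [Matrix.one_apply]

lemma ip_appM_right (A : Matrix κ κ ℂ) (w v : EuclideanSpace ℂ κ) :
    ip w (appM A v) = ip (appM A.conjTranspose w) v := by
  simp only [ip, appM_apply, Matrix.conjTranspose_apply, Finset.mul_sum, map_sum, map_mul,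
    Finset.sum_mul, starRingEnd_apply, star_star]
  rw [Finset.sum_comm]
  exact Finset.sum_congr rfl fun i _ => Finset.sum_congr rfl fun j _ => by ring

lemma ip_appM_left (A : Matrix κ κ ℂ) (w v : EuclideanSpace ℂ κ) :
    ip (appM A w) v = ip w (appM A.conjTranspose v) := by
  rw [← ip_conj, ip_appM_right, ip_conj]

end Aux

section Aux2

local notation "cj" => starRingEnd ℂ

set_option linter.unusedSectionVars false

variable {ι : Type*} [Fintype ι] [DecidableEq ι]

lemma tens_apply (a b : EuclideanSpace ℂ ι) (p : ι × ι) : tens a b p = a p.1 * b p.2 := rfl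

lemma appM_tens (V : Matrix (ι × ι) (ι × ι) ℂ) (a b : EuclideanSpace ℂ ι) (p : ι × ι) :
    appM V (tens a b) p = ∑ x, ∑ y, V p (x, y) * (a x * b y) := by
  rw [appM_apply, Fintype.sum_prod_type]
  rfl

/-- contraction of the first leg: `(k* ⊗ 1) w`. -/
def ctr1 (k : EuclideanSpace ℂ ι) (w : EuclideanSpace ℂ (ι × ι)) : EuclideanSpace ℂ ι :=
  WithLp.toLp 2 fun c => ∑ x, (starRingEnd ℂ) (k x) * w (x, c)

/-- contraction of the second leg: `(1 ⊗ k*) w`. -/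
def ctr2 (k : EuclideanSpace ℂ ι) (w : EuclideanSpace ℂ (ι × ι)) : EuclideanSpace ℂ ι :=
  WithLp.toLp 2 fun a => ∑ y, (starRingEnd ℂ) (k y) * w (a, y)

/-- `L_k`-operator: `χ ↦ (k* ⊗ 1) V (k ⊗ χ)`. -/
def QL (V : Matrix (ι × ι) (ι × ι) ℂ) (k χ : EuclideanSpace ℂ ι) : EuclideanSpace ℂ ι :=
  ctr1 k (appM V (tens k χ))

/-- `ρ_k`-operator: `χ ↦ (1 ⊗ k*) V (χ ⊗ k)`. -/
def QR (V : Matrix (ι × ι) (ι × ι) ℂ) (k χ : EuclideanSpace ℂ ι) : EuclideanSpace ℂ ι :=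
  ctr2 k (appM V (tens χ k))

lemma ip_tens_tens (a b c d : EuclideanSpace ℂ ι) :
    ip (tens a b) (tens c d) = ip a c * ip b d := by
  show (∑ p : ι × ι, _) = _
  rw [Fintype.sum_prod_type, ip, ip, Finset.sum_mul_sum]
  exact Finset.sum_congr rfl fun x _ => Finset.sum_congr rfl fun y _ => by
    simp [tens_apply]; ring

lemma ip_tens_left (k μ : EuclideanSpace ℂ ι) (w : EuclideanSpace ℂ (ι × ι)) :
    ip (tens k μ) w = ip μ (ctr1 k w) := by
  show (∑ p : ι × ι, _) = _
  rw [Fintype.sum_prod_type, Finset.sum_comm, ip]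
  refine Finset.sum_congr rfl fun c _ => ?_
  rw [ctr1, Finset.mul_sum]
  exact Finset.sum_congr rfl fun x _ => by
    simp [tens_apply]; ring

lemma ip_tens_right (z k : EuclideanSpace ℂ ι) (w : EuclideanSpace ℂ (ι × ι)) :
    ip (tens z k) w = ip z (ctr2 k w) := by
  show (∑ p : ι × ι, _) = _
  rw [Fintype.sum_prod_type, ip]
  refine Finset.sum_congr rfl fun a _ => ?_
  rw [ctr2, Finset.mul_sum]
  exact Finset.sum_congr rfl fun y _ => by
    simp [tens_apply]; ring

/-- triple tensors -/
def tens3 (x y z : EuclideanSpace ℂ ι) : EuclideanSpace ℂ (ι × ι × ι) :=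
  WithLp.toLp 2 fun p => x p.1 * y p.2.1 * z p.2.2

lemma appM_leg12 (V : Matrix (ι × ι) (ι × ι) ℂ) (w : EuclideanSpace ℂ (ι × ι × ι))
    (p : ι × ι × ι) :
    appM (leg12 V) w p = ∑ x, ∑ y, V (p.1, p.2.1) (x, y) * w (x, y, p.2.2) := by
  rw [appM_apply, Fintype.sum_prod_type]
  refine Finset.sum_congr rfl fun x _ => ?_
  rw [Fintype.sum_prod_type]
  refine Finset.sum_congr rfl fun y _ => ?_
  show ∑ z, V (p.1, p.2.1) (x, y) * (if p.2.2 = z then 1 else 0) * w (x, y, z) = _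
  simp

lemma appM_leg13 (V : Matrix (ι × ι) (ι × ι) ℂ) (w : EuclideanSpace ℂ (ι × ι × ι))
    (p : ι × ι × ι) :
    appM (leg13 V) w p = ∑ x, ∑ z, V (p.1, p.2.2) (x, z) * w (x, p.2.1, z) := by
  rw [appM_apply, Fintype.sum_prod_type]
  refine Finset.sum_congr rfl fun x _ => ?_
  rw [Fintype.sum_prod_type, Finset.sum_comm]
  refine Finset.sum_congr rfl fun z _ => ?_
  show ∑ y, V (p.1, p.2.2) (x, z) * (if p.2.1 = y then 1 else 0) * w (x, y, z) = _
  simp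

lemma appM_leg23 (V : Matrix (ι × ι) (ι × ι) ℂ) (w : EuclideanSpace ℂ (ι × ι × ι))
    (p : ι × ι × ι) :
    appM (leg23 V) w p = ∑ y, ∑ z, V (p.2.1, p.2.2) (y, z) * w (p.1, y, z) := by
  rw [appM_apply, Fintype.sum_prod_type]
  show ∑ x, ∑ q2 : ι × ι, (V (p.2.1, p.2.2) (q2.1, q2.2) * (if p.1 = x then 1 else 0))
      * w (x, q2) = _
  simp only [mul_ite, mul_one, mul_zero, ite_mul, zero_mul]
  rw [Finset.sum_comm]
  simp only [Finset.sum_ite_eq, Finset.mem_univ, if_true]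
  rw [Fintype.sum_prod_type]

end Aux2

section Aux3

local notation "cj" => starRingEnd ℂ

set_option linter.unusedSectionVars false

variable {ι : Type*} [Fintype ι] [DecidableEq ι]

lemma appM_leg12_pair (V : Matrix (ι × ι) (ι × ι) ℂ) (w : EuclideanSpace ℂ (ι × ι × ι))
    (p : ι × ι × ι) :
    appM (leg12 V) w p = ∑ q : ι × ι, V (p.1, p.2.1) q * w (q.1, q.2, p.2.2) := by
  rw [appM_leg12, Fintype.sum_prod_type]

lemma leg12_cancel_gen (A B : Matrix (ι × ι) (ι × ι) ℂ) (h : A * B = 1)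
    (w : EuclideanSpace ℂ (ι × ι × ι)) :
    appM (leg12 A) (appM (leg12 B) w) = w := by
  refine PiLp.ext fun p => ?_
  rw [appM_leg12_pair]
  simp_rw [appM_leg12_pair, Finset.mul_sum]
  rw [Finset.sum_comm]
  have : ∀ q' : ι × ι,
      (∑ q : ι × ι, A (p.1, p.2.1) q * (B q q' * w (q'.1, q'.2, p.2.2)))
      = (A * B) (p.1, p.2.1) q' * w (q'.1, q'.2, p.2.2) := by
    intro q'
    rw [Matrix.mul_apply, Finset.sum_mul]
    exact Finset.sum_congr rfl fun q _ => by ring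
  simp_rw [this, h, Matrix.one_apply]
  simp

/-- the pentagon equation, applied to a vector. -/
lemma pent_app {V : Matrix (ι × ι) (ι × ι) ℂ} (hV : IsMU V)
    (w : EuclideanSpace ℂ (ι × ι × ι)) :
    appM (leg12 V) (appM (leg13 V) (appM (leg23 V) w)) =
      appM (leg23 V) (appM (leg12 V) w) := by
  rw [← appM_mul, ← appM_mul, ← appM_mul, hV.2.2]

lemma appM_inv {V : Matrix (ι × ι) (ι × ι) ℂ} (hV : IsMU V) (w : EuclideanSpace ℂ (ι × ι)) :
    appM V.conjTranspose (appM V w) = w := by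
  rw [← appM_mul, hV.2.1, appM_one]

lemma fix_star {V : Matrix (ι × ι) (ι × ι) ℂ} (hV : IsMU V) {w : EuclideanSpace ℂ (ι × ι)}
    (h : appM V w = w) : appM V.conjTranspose w = w := by
  conv_lhs => rw [← h]
  exact appM_inv hV w

lemma ip_appV {V : Matrix (ι × ι) (ι × ι) ℂ} (hV : IsMU V) (w v : EuclideanSpace ℂ (ι × ι)) :
    ip (appM V w) (appM V v) = ip w v := by
  rw [ip_appM_left, appM_inv hV]

lemma mact_eq {κ : Type*} [Fintype κ] (M : Matrix κ κ ℂ) (v : EuclideanSpace ℂ κ) :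
    mact M v = appM M v := rfl

/-- orthogonality property of `L_k`: `⟨μ, L_k χ⟩ = ⟨μ, χ⟩` for `μ ∈ H^k`. -/
lemma ortho_QL {V : Matrix (ι × ι) (ι × ι) ℂ} (hV : IsMU V) {k μ : EuclideanSpace ℂ ι}
    (hk1 : ip k k = 1) (hμ : appM V (tens k μ) = tens k μ) (χ : EuclideanSpace ℂ ι) :
    ip μ (QL V k χ) = ip μ χ := by
  rw [QL, ← ip_tens_left, ip_appM_right, fix_star hV hμ, ip_tens_tens, hk1, one_mul]

/-- if `L_k μ = μ` then `μ ∈ H^k`. -/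
lemma fix_QL {V : Matrix (ι × ι) (ι × ι) ℂ} (hV : IsMU V) {k μ : EuclideanSpace ℂ ι}
    (hk1 : ip k k = 1) (h : QL V k μ = μ) : appM V (tens k μ) = tens k μ := by
  set S := appM V (tens k μ) with hS
  have h1 : ip (tens k μ) S = ip μ μ := by
    rw [hS, ip_tens_left, ← QL, h]
  have h2 : ip S (tens k μ) = ip μ μ := by
    rw [← ip_conj, h1, ip_self_normSq]
    exact Complex.conj_ofReal _
  have h3 : ip S S = ip μ μ := by
    rw [hS, ip_appV hV, ip_tens_tens, hk1, one_mul]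
  have h4 : ip (tens k μ) (tens k μ) = ip μ μ := by rw [ip_tens_tens, hk1, one_mul]
  have key : ∀ p, (S - tens k μ) p = 0 := by
    apply ip_self_eq_zero
    have expand : ip (WithLp.ofLp (S - tens k μ)) (WithLp.ofLp (S - tens k μ))
        = ip S S - ip S (tens k μ) - ip (tens k μ) S + ip (tens k μ) (tens k μ) := by
      simp only [ip, PiLp.sub_apply, Pi.sub_apply, WithLp.ofLp_sub, map_sub]
      rw [← Finset.sum_sub_distrib, ← Finset.sum_sub_distrib, ← Finset.sum_add_distrib]
      exact Finset.sum_congr rfl fun i _ => by ring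
    rw [expand, h1, h2, h3, h4]; ring
  refine PiLp.ext fun p => ?_
  have := key p
  rw [PiLp.sub_apply] at this
  linear_combination this

/-- if `ρ_k μ = μ` then `μ ∈ H_k`. -/
lemma fix_QR {V : Matrix (ι × ι) (ι × ι) ℂ} (hV : IsMU V) {k μ : EuclideanSpace ℂ ι}
    (hk1 : ip k k = 1) (h : QR V k μ = μ) : appM V (tens μ k) = tens μ k := by
  set S := appM V (tens μ k) with hS
  have h1 : ip (tens μ k) S = ip μ μ := by
    rw [hS, ip_tens_right, ← QR, h]
  have h2 : ip S (tens μ k) = ip μ μ := by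
    rw [← ip_conj, h1, ip_self_normSq]
    exact Complex.conj_ofReal _
  have h3 : ip S S = ip μ μ := by
    rw [hS, ip_appV hV, ip_tens_tens, hk1, mul_one]
  have h4 : ip (tens μ k) (tens μ k) = ip μ μ := by rw [ip_tens_tens, hk1, mul_one]
  have key : ∀ p, (S - tens μ k) p = 0 := by
    apply ip_self_eq_zero
    have expand : ip (WithLp.ofLp (S - tens μ k)) (WithLp.ofLp (S - tens μ k))
        = ip S S - ip S (tens μ k) - ip (tens μ k) S + ip (tens μ k) (tens μ k) := by
      simp only [ip, PiLp.sub_apply, Pi.sub_apply, WithLp.ofLp_sub, map_sub]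
      rw [← Finset.sum_sub_distrib, ← Finset.sum_sub_distrib, ← Finset.sum_add_distrib]
      exact Finset.sum_congr rfl fun i _ => by ring
    rw [expand, h1, h2, h3, h4]; ring
  refine PiLp.ext fun p => ?_
  have := key p
  rw [PiLp.sub_apply] at this
  linear_combination this

end Aux3

section Aux4

local notation "cj" => starRingEnd ℂ

set_option linter.unusedSectionVars false
set_option maxHeartbeats 1000000

variable {ι : Type*} [Fintype ι] [DecidableEq ι]

/-- `V = 1` on `H_k ⊗ H^k`. -/
lemma LC {V : Matrix (ι × ι) (ι × ι) ℂ} (hV : IsMU V) {k η μ : EuclideanSpace ℂ ι}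
    (hk1 : ip k k = 1) (hη : appM V (tens η k) = tens η k)
    (hμ : appM V (tens k μ) = tens k μ) :
    appM V (tens η μ) = tens η μ := by
  have hη' : appM V.conjTranspose (tens η k) = tens η k := fix_star hV hη
  set t : EuclideanSpace ℂ (ι × ι × ι) := tens3 η k μ with ht
  have h23 : appM (leg23 V) t = t := by
    refine PiLp.ext fun p => ?_
    rw [appM_leg23]
    have hq := cfun hμ (p.2.1, p.2.2)
    rw [appM_tens] at hq
    calc ∑ y, ∑ z, V (p.2.1, p.2.2) (y, z) * t (p.1, y, z)
        = η p.1 * ∑ x, ∑ y, V (p.2.1, p.2.2) (x, y) * (k x * μ y) := by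
          rw [Finset.mul_sum]
          refine Finset.sum_congr rfl fun y _ => ?_
          rw [Finset.mul_sum]
          refine Finset.sum_congr rfl fun z _ => ?_
          show V _ _ * (η p.1 * k y * μ z) = _
          ring
      _ = η p.1 * tens k μ (p.2.1, p.2.2) := by rw [hq]
      _ = t p := by
          show η p.1 * (k p.2.1 * μ p.2.2) = η p.1 * k p.2.1 * μ p.2.2
          ring
  have h12 : appM (leg12 V) t = t := by
    refine PiLp.ext fun p => ?_
    rw [appM_leg12]
    have hq := cfun hη (p.1, p.2.1)
    rw [appM_tens] at hq
    calc ∑ x, ∑ y, V (p.1, p.2.1) (x, y) * t (x, y, p.2.2)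
        = μ p.2.2 * ∑ x, ∑ y, V (p.1, p.2.1) (x, y) * (η x * k y) := by
          rw [Finset.mul_sum]
          refine Finset.sum_congr rfl fun x _ => ?_
          rw [Finset.mul_sum]
          refine Finset.sum_congr rfl fun y _ => ?_
          show V _ _ * (η x * k y * μ p.2.2) = _
          ring
      _ = μ p.2.2 * tens η k (p.1, p.2.1) := by rw [hq]
      _ = t p := by
          show μ p.2.2 * (η p.1 * k p.2.1) = η p.1 * k p.2.1 * μ p.2.2
          ring
  have hpent := pent_app hV t
  rw [h23, h12, h23] at hpent
  have hX : appM (leg13 V) t = appM (leg12 V.conjTranspose) t := by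
    conv_lhs => rw [← leg12_cancel_gen V.conjTranspose V hV.2.1 (appM (leg13 V) t)]
    rw [hpent]
  refine PiLp.ext fun q => ?_
  have hb : ∀ b, k b * appM V (tens η μ) q = η q.1 * k b * μ q.2 := by
    intro b
    have h1 := cfun hX (q.1, b, q.2)
    rw [appM_leg13, appM_leg12] at h1
    have e1 : ∑ x, ∑ z, V ((q.1, b, q.2).1, (q.1, b, q.2).2.2) (x, z) * t (x, (q.1, b, q.2).2.1, z)
        = k b * appM V (tens η μ) q := by
      rw [appM_tens, Finset.mul_sum]
      refine Finset.sum_congr rfl fun x _ => ?_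
      rw [Finset.mul_sum]
      refine Finset.sum_congr rfl fun z _ => ?_
      show V _ _ * (η x * k b * μ z) = k b * (V _ _ * (η x * μ z))
      ring
    have e2 : ∑ x, ∑ y, V.conjTranspose ((q.1, b, q.2).1, (q.1, b, q.2).2.1) (x, y)
          * t (x, y, (q.1, b, q.2).2.2)
        = η q.1 * k b * μ q.2 := by
      have hq := cfun hη' (q.1, b)
      rw [appM_tens] at hq
      calc ∑ x, ∑ y, V.conjTranspose (q.1, b) (x, y) * t (x, y, q.2)
          = μ q.2 * ∑ x, ∑ y, V.conjTranspose (q.1, b) (x, y) * (η x * k y) := by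
            rw [Finset.mul_sum]
            refine Finset.sum_congr rfl fun x _ => ?_
            rw [Finset.mul_sum]
            refine Finset.sum_congr rfl fun y _ => ?_
            show V.conjTranspose _ _ * (η x * k y * μ q.2) = _
            ring
        _ = μ q.2 * tens η k (q.1, b) := by rw [hq]
        _ = η q.1 * k b * μ q.2 := by
            show μ q.2 * (η q.1 * k b) = _
            ring
    rw [e1] at h1
    rw [e2] at h1
    exact h1
  have : (∑ b, cj (k b) * k b) * appM V (tens η μ) q
      = (∑ b, cj (k b) * k b) * (η q.1 * μ q.2) := by
    rw [Finset.sum_mul, Finset.sum_mul]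
    refine Finset.sum_congr rfl fun b _ => ?_
    calc cj (k b) * k b * appM V (tens η μ) q = cj (k b) * (k b * appM V (tens η μ) q) := by ring
      _ = cj (k b) * (η q.1 * k b * μ q.2) := by rw [hb b]
      _ = cj (k b) * k b * (η q.1 * μ q.2) := by ring
  have hk1' : (∑ b, cj (k b) * k b) = 1 := hk1
  rw [hk1', one_mul, one_mul] at this
  exact this

end Aux4

section Aux5

local notation "cj" => starRingEnd ℂ

set_option linter.unusedSectionVars false
set_option maxHeartbeats 1000000

variable {ι : Type*} [Fintype ι] [DecidableEq ι]

lemma sum_rot3 (H : ι → ι → ι → ℂ) :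
    ∑ y, ∑ z, ∑ a, H y z a = ∑ a, ∑ y, ∑ z, H y z a := by
  calc ∑ y, ∑ z, ∑ a, H y z a = ∑ y, ∑ a, ∑ z, H y z a :=
        Finset.sum_congr rfl fun y _ => Finset.sum_comm
    _ = ∑ a, ∑ y, ∑ z, H y z a := Finset.sum_comm

lemma sum_swap4 (H : ι → ι → ι → ι → ℂ) :
    ∑ x, ∑ b, ∑ c, ∑ d, H x b c d = ∑ c, ∑ d, ∑ x, ∑ b, H x b c d := by
  calc ∑ x, ∑ b, ∑ c, ∑ d, H x b c d
      = ∑ x, ∑ c, ∑ b, ∑ d, H x b c d :=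
        Finset.sum_congr rfl fun x _ => Finset.sum_comm
    _ = ∑ c, ∑ x, ∑ b, ∑ d, H x b c d := Finset.sum_comm
    _ = ∑ c, ∑ x, ∑ d, ∑ b, H x b c d :=
        Finset.sum_congr rfl fun c _ => Finset.sum_congr rfl fun x _ => Finset.sum_comm
    _ = ∑ c, ∑ d, ∑ x, ∑ b, H x b c d :=
        Finset.sum_congr rfl fun c _ => Finset.sum_comm

/-- stability of `H_k` under `L_k`. -/
lemma LB {V : Matrix (ι × ι) (ι × ι) ℂ} (hV : IsMU V) {k F : EuclideanSpace ℂ ι}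
    (hk : appM V (tens k k) = tens k k) (hF : appM V (tens F k) = tens F k) :
    appM V (tens (QL V k F) k) = tens (QL V k F) k := by
  set u := appM V (tens k F) with hu
  set t : EuclideanSpace ℂ (ι × ι × ι) := tens3 k F k with ht
  set W : EuclideanSpace ℂ (ι × ι × ι) := WithLp.toLp 2 (fun p => u (p.1, p.2.1) * k p.2.2) with hW
  have h23 : appM (leg23 V) t = t := by
    refine PiLp.ext fun p => ?_
    rw [appM_leg23]
    have hq := cfun hF (p.2.1, p.2.2)
    rw [appM_tens] at hq
    calc ∑ y, ∑ z, V (p.2.1, p.2.2) (y, z) * t (p.1, y, z)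
        = k p.1 * ∑ x, ∑ y, V (p.2.1, p.2.2) (x, y) * (F x * k y) := by
          rw [Finset.mul_sum]
          refine Finset.sum_congr rfl fun y _ => ?_
          rw [Finset.mul_sum]
          refine Finset.sum_congr rfl fun z _ => ?_
          show V _ _ * (k p.1 * F y * k z) = _
          ring
      _ = k p.1 * tens F k (p.2.1, p.2.2) := by rw [hq]
      _ = t p := by
          show k p.1 * (F p.2.1 * k p.2.2) = k p.1 * F p.2.1 * k p.2.2
          ring
  have h13 : appM (leg13 V) t = t := by
    refine PiLp.ext fun p => ?_
    rw [appM_leg13]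
    have hq := cfun hk (p.1, p.2.2)
    rw [appM_tens] at hq
    calc ∑ x, ∑ z, V (p.1, p.2.2) (x, z) * t (x, p.2.1, z)
        = F p.2.1 * ∑ x, ∑ y, V (p.1, p.2.2) (x, y) * (k x * k y) := by
          rw [Finset.mul_sum]
          refine Finset.sum_congr rfl fun x _ => ?_
          rw [Finset.mul_sum]
          refine Finset.sum_congr rfl fun z _ => ?_
          show V _ _ * (k x * F p.2.1 * k z) = _
          ring
      _ = F p.2.1 * tens k k (p.1, p.2.2) := by rw [hq]
      _ = t p := by
          show F p.2.1 * (k p.1 * k p.2.2) = k p.1 * F p.2.1 * k p.2.2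
          ring
  have h12 : appM (leg12 V) t = W := by
    refine PiLp.ext fun p => ?_
    rw [appM_leg12]
    show _ = appM V (tens k F) (p.1, p.2.1) * k p.2.2
    rw [appM_tens, Finset.sum_mul]
    refine Finset.sum_congr rfl fun x _ => ?_
    rw [Finset.sum_mul]
    refine Finset.sum_congr rfl fun y _ => ?_
    show V _ _ * (k x * F y * k p.2.2) = V _ _ * (k x * F y) * k p.2.2
    ring
  have hpent := pent_app hV t
  rw [h23, h13, h12] at hpent
  -- hpent : W = appM (leg23 V) W
  refine PiLp.ext fun q => ?_
  rw [appM_tens]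
  have key : ∀ a, (∑ y, ∑ z, V q (y, z) * (u (a, y) * k z)) = u (a, q.1) * k q.2 := by
    intro a
    have h1 := cfun hpent (a, q.1, q.2)
    rw [appM_leg23] at h1
    exact h1.symm
  calc ∑ y, ∑ z, V q (y, z) * (QL V k F y * k z)
      = ∑ y, ∑ z, ∑ a, cj (k a) * (V q (y, z) * (u (a, y) * k z)) := by
        refine Finset.sum_congr rfl fun y _ => Finset.sum_congr rfl fun z _ => ?_
        show V q (y, z) * ((∑ a, cj (k a) * u (a, y)) * k z) = _
        rw [Finset.sum_mul, Finset.mul_sum]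
        refine Finset.sum_congr rfl fun a _ => by ring
    _ = ∑ a, ∑ y, ∑ z, cj (k a) * (V q (y, z) * (u (a, y) * k z)) := sum_rot3 _
    _ = ∑ a, cj (k a) * (u (a, q.1) * k q.2) := by
        refine Finset.sum_congr rfl fun a _ => ?_
        rw [← key a, Finset.mul_sum]
        refine Finset.sum_congr rfl fun y _ => ?_
        rw [Finset.mul_sum]
    _ = tens (QL V k F) k q := by
        show _ = (∑ a, cj (k a) * u (a, q.1)) * k q.2
        rw [Finset.sum_mul]
        refine Finset.sum_congr rfl fun a _ => by ring

/-- idempotency of `L_k`. -/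
lemma LA {V : Matrix (ι × ι) (ι × ι) ℂ} (hV : IsMU V) {k : EuclideanSpace ℂ ι}
    (hk1 : ip k k = 1) (hk : appM V (tens k k) = tens k k) (χ : EuclideanSpace ℂ ι) :
    QL V k (QL V k χ) = QL V k χ := by
  set s := appM V (tens k χ) with hs
  set w1 : EuclideanSpace ℂ (ι × ι × ι) := WithLp.toLp 2 (fun p => k p.1 * s (p.2.1, p.2.2)) with hw1
  set t : EuclideanSpace ℂ (ι × ι × ι) := tens3 k k χ with ht
  have h23 : appM (leg23 V) t = w1 := by
    refine PiLp.ext fun p => ?_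
    rw [appM_leg23]
    show _ = k p.1 * appM V (tens k χ) (p.2.1, p.2.2)
    rw [appM_tens, Finset.mul_sum]
    refine Finset.sum_congr rfl fun y _ => ?_
    rw [Finset.mul_sum]
    refine Finset.sum_congr rfl fun z _ => ?_
    show V _ _ * (k p.1 * k y * χ z) = k p.1 * (V _ _ * (k y * χ z))
    ring
  have h12 : appM (leg12 V) t = t := by
    refine PiLp.ext fun p => ?_
    rw [appM_leg12]
    have hq := cfun hk (p.1, p.2.1)
    rw [appM_tens] at hq
    calc ∑ x, ∑ y, V (p.1, p.2.1) (x, y) * t (x, y, p.2.2)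
        = χ p.2.2 * ∑ x, ∑ y, V (p.1, p.2.1) (x, y) * (k x * k y) := by
          rw [Finset.mul_sum]
          refine Finset.sum_congr rfl fun x _ => ?_
          rw [Finset.mul_sum]
          refine Finset.sum_congr rfl fun y _ => ?_
          show V _ _ * (k x * k y * χ p.2.2) = _
          ring
      _ = χ p.2.2 * tens k k (p.1, p.2.1) := by rw [hq]
      _ = t p := by
          show χ p.2.2 * (k p.1 * k p.2.1) = k p.1 * k p.2.1 * χ p.2.2
          ring
  have hpent := pent_app hV t
  rw [h23, h12, h23] at hpent
  -- hpent : appM (leg12 V) (appM (leg13 V) w1) = w1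
  have hX : appM (leg13 V) w1 = appM (leg12 V.conjTranspose) w1 := by
    conv_lhs => rw [← leg12_cancel_gen V.conjTranspose V hV.2.1 (appM (leg13 V) w1)]
    rw [hpent]
  refine PiLp.ext fun c => ?_
  have step1 : QL V k (QL V k χ) c
      = ∑ x, ∑ b, cj (k x) * cj (k b) * appM (leg13 V) w1 (x, b, c) := by
    show ∑ x, cj (k x) * appM V (tens k (ctr1 k s)) (x, c) = _
    refine Finset.sum_congr rfl fun x _ => ?_
    have inner : appM V (tens k (ctr1 k s)) (x, c)
        = ∑ b, cj (k b) * appM (leg13 V) w1 (x, b, c) := by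
      have e3 : ∀ b, cj (k b) * appM (leg13 V) w1 (x, b, c)
          = ∑ x', ∑ z, cj (k b) * (V (x, c) (x', z) * (k x' * s (b, z))) := by
        intro b
        rw [appM_leg13, Finset.mul_sum]
        refine Finset.sum_congr rfl fun x' _ => ?_
        rw [Finset.mul_sum]
      simp_rw [e3]
      rw [appM_tens]
      have expand : ∀ x' z, V (x, c) (x', z) * (k x' * ctr1 k s z)
          = ∑ b, cj (k b) * (V (x, c) (x', z) * (k x' * s (b, z))) := by
        intro x' z
        show V (x, c) (x', z) * (k x' * ∑ b, cj (k b) * s (b, z)) = _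
        rw [Finset.mul_sum, Finset.mul_sum]
        exact Finset.sum_congr rfl fun b _ => by ring
      simp_rw [expand]
      exact sum_rot3 _
    rw [inner, Finset.mul_sum]
    exact Finset.sum_congr rfl fun b _ => by ring
  rw [step1]
  simp_rw [hX]
  have step3 : ∀ x b, appM (leg12 V.conjTranspose) w1 (x, b, c)
      = ∑ x', ∑ y, V.conjTranspose (x, b) (x', y) * (k x' * s (y, c)) := by
    intro x b
    rw [appM_leg12]
  simp_rw [step3]
  calc ∑ x, ∑ b, cj (k x) * cj (k b)
          * ∑ x', ∑ y, V.conjTranspose (x, b) (x', y) * (k x' * s (y, c))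
      = ∑ x, ∑ b, ∑ x', ∑ y, cj (k x) * cj (k b)
          * (V.conjTranspose (x, b) (x', y) * (k x' * s (y, c))) := by
        refine Finset.sum_congr rfl fun x _ => Finset.sum_congr rfl fun b _ => ?_
        rw [Finset.mul_sum]
        exact Finset.sum_congr rfl fun x' _ => by rw [Finset.mul_sum]
    _ = ∑ x', ∑ y, ∑ x, ∑ b, cj (k x) * cj (k b)
          * (V.conjTranspose (x, b) (x', y) * (k x' * s (y, c))) := sum_swap4 _
    _ = ∑ x', ∑ y, (k x' * s (y, c)) * cj (appM V (tens k k) (x', y)) := by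
        refine Finset.sum_congr rfl fun x' _ => Finset.sum_congr rfl fun y _ => ?_
        rw [appM_tens (V := V) (a := k) (b := k), map_sum, Finset.mul_sum]
        refine Finset.sum_congr rfl fun x _ => ?_
        rw [map_sum, Finset.mul_sum]
        refine Finset.sum_congr rfl fun b _ => ?_
        rw [map_mul, map_mul]
        simp only [Matrix.conjTranspose_apply, ← starRingEnd_apply]
        ring
    _ = ∑ x', ∑ y, (k x' * s (y, c)) * (cj (k x') * cj (k y)) := by
        simp_rw [hk]
        refine Finset.sum_congr rfl fun x' _ => Finset.sum_congr rfl fun y _ => ?_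
        rw [tens_apply, map_mul]
    _ = (∑ x', cj (k x') * k x') * ∑ y, cj (k y) * s (y, c) := by
        rw [Finset.sum_mul_sum]
        refine Finset.sum_congr rfl fun x' _ => Finset.sum_congr rfl fun y _ => by ring
    _ = QL V k χ c := by
        have : (∑ x', cj (k x') * k x') = 1 := hk1
        rw [this, one_mul]
        rfl

end Aux5

section Aux6

local notation "cj" => starRingEnd ℂ

set_option linter.unusedSectionVars false
set_option maxHeartbeats 1000000

variable {ι : Type*} [Fintype ι] [DecidableEq ι]

lemma heRho {V : Matrix (ι × ι) (ι × ι) ℂ} (hV : IsMU V) {e : EuclideanSpace ℂ ι}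
    (he1 : ip e e = 1) (he : appM V (tens e e) = tens e e) (z : EuclideanSpace ℂ ι) :
    ip e (QR V e z) = ip e z := by
  rw [QR, ← ip_tens_right, ip_appM_right, fix_star hV he, ip_tens_tens, he1, mul_one]

lemma mirrorKey {V : Matrix (ι × ι) (ι × ι) ℂ} (hV : IsMU V) {e : EuclideanSpace ℂ ι}
    (he : appM V (tens e e) = tens e e) (χ : EuclideanSpace ℂ ι) (a b : ι) :
    appM V (tens (QR V e χ) e) (a, b)
      = QR V e (WithLp.toLp 2 fun y => appM V (tens χ e) (a, y)) b := by
  set S := appM V (tens χ e) with hS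
  set t : EuclideanSpace ℂ (ι × ι × ι) := tens3 χ e e with ht
  set X : EuclideanSpace ℂ (ι × ι × ι) := WithLp.toLp 2 (fun p => S (p.1, p.2.2) * e p.2.1) with hX
  set Y : EuclideanSpace ℂ (ι × ι × ι) := WithLp.toLp 2 (fun p => S (p.1, p.2.1) * e p.2.2) with hY
  have h23 : appM (leg23 V) t = t := by
    refine PiLp.ext fun p => ?_
    rw [appM_leg23]
    have hq := cfun he (p.2.1, p.2.2)
    rw [appM_tens] at hq
    calc ∑ y, ∑ z, V (p.2.1, p.2.2) (y, z) * t (p.1, y, z)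
        = χ p.1 * ∑ x, ∑ y, V (p.2.1, p.2.2) (x, y) * (e x * e y) := by
          rw [Finset.mul_sum]
          refine Finset.sum_congr rfl fun y _ => ?_
          rw [Finset.mul_sum]
          refine Finset.sum_congr rfl fun z _ => ?_
          show V _ _ * (χ p.1 * e y * e z) = _
          ring
      _ = χ p.1 * tens e e (p.2.1, p.2.2) := by rw [hq]
      _ = t p := by
          show χ p.1 * (e p.2.1 * e p.2.2) = χ p.1 * e p.2.1 * e p.2.2
          ring
  have h13 : appM (leg13 V) t = X := by
    refine PiLp.ext fun p => ?_
    rw [appM_leg13]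
    show _ = appM V (tens χ e) (p.1, p.2.2) * e p.2.1
    rw [appM_tens, Finset.sum_mul]
    refine Finset.sum_congr rfl fun x _ => ?_
    rw [Finset.sum_mul]
    refine Finset.sum_congr rfl fun z _ => ?_
    show V _ _ * (χ x * e p.2.1 * e z) = V _ _ * (χ x * e z) * e p.2.1
    ring
  have h12 : appM (leg12 V) t = Y := by
    refine PiLp.ext fun p => ?_
    rw [appM_leg12]
    show _ = appM V (tens χ e) (p.1, p.2.1) * e p.2.2
    rw [appM_tens, Finset.sum_mul]
    refine Finset.sum_congr rfl fun x _ => ?_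
    rw [Finset.sum_mul]
    refine Finset.sum_congr rfl fun y _ => ?_
    show V _ _ * (χ x * e y * e p.2.2) = V _ _ * (χ x * e y) * e p.2.2
    ring
  have hpent := pent_app hV t
  rw [h23, h13, h12] at hpent
  -- hpent : appM (leg12 V) X = appM (leg23 V) Y
  calc appM V (tens (QR V e χ) e) (a, b)
      = ∑ c, cj (e c) * appM (leg12 V) X (a, b, c) := by
        have e1 : ∀ c, cj (e c) * appM (leg12 V) X (a, b, c)
            = ∑ x, ∑ y, cj (e c) * (V (a, b) (x, y) * (S (x, c) * e y)) := by
          intro c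
          rw [appM_leg12, Finset.mul_sum]
          refine Finset.sum_congr rfl fun x _ => ?_
          rw [Finset.mul_sum]
        simp_rw [e1]
        rw [appM_tens]
        have expand : ∀ x y, V (a, b) (x, y) * (QR V e χ x * e y)
            = ∑ c, cj (e c) * (V (a, b) (x, y) * (S (x, c) * e y)) := by
          intro x y
          show V (a, b) (x, y) * ((∑ c, cj (e c) * S (x, c)) * e y) = _
          rw [Finset.sum_mul, Finset.mul_sum]
          exact Finset.sum_congr rfl fun c _ => by ring
        simp_rw [expand]
        exact sum_rot3 _
    _ = ∑ c, cj (e c) * appM (leg23 V) Y (a, b, c) := by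
        refine Finset.sum_congr rfl fun c _ => ?_
        rw [cfun hpent (a, b, c)]
    _ = QR V e (WithLp.toLp 2 fun y => appM V (tens χ e) (a, y)) b := by
        show _ = ∑ c, cj (e c) * appM V (tens (WithLp.toLp 2 fun y => S (a, y)) e) (b, c)
        refine Finset.sum_congr rfl fun c _ => ?_
        congr 1
        rw [appM_leg23, appM_tens]

lemma LD {V : Matrix (ι × ι) (ι × ι) ℂ} (hV : IsMU V) {e : EuclideanSpace ℂ ι}
    (he1 : ip e e = 1) (he : appM V (tens e e) = tens e e) (χ : EuclideanSpace ℂ ι) :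
    QR V e (QR V e χ) = QR V e χ := by
  refine PiLp.ext fun a => ?_
  show ∑ b, cj (e b) * appM V (tens (QR V e χ) e) (a, b) = QR V e χ a
  simp_rw [mirrorKey hV he χ a]
  show ip e (QR V e (WithLp.toLp 2 fun y => appM V (tens χ e) (a, y))) = QR V e χ a
  rw [heRho hV he1 he]
  rfl

lemma R1 {V : Matrix (ι × ι) (ι × ι) ℂ} (hV : IsMU V) {e : EuclideanSpace ℂ ι}
    (he1 : ip e e = 1)
    (hefix : ∀ η, appM V (tens e η) = tens e η)
    (huniq : ∀ ξ, (∀ η, mact V (tens ξ η) = tens ξ η) → ∃ c : ℂ, ξ = c • e)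
    (χ : EuclideanSpace ℂ ι) :
    QR V e χ = WithLp.toLp 2 fun i => ip e χ * e i := by
  have he : appM V (tens e e) = tens e e := hefix e
  have h1 : QR V e (QR V e χ) = QR V e χ := LD hV he1 he χ
  have h2 : appM V (tens (QR V e χ) e) = tens (QR V e χ) e := fix_QR hV he1 h1
  have h3 : ∀ η, mact V (tens (QR V e χ) η) = tens (QR V e χ) η := fun η => by
    rw [mact_eq]
    exact LC hV he1 h2 (hefix η)
  obtain ⟨c, hc⟩ := huniq _ h3
  have h4 : ip e (QR V e χ) = c := by
    rw [hc]
    show ∑ i, cj (e i) * (c • e) i = c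
    calc ∑ i, cj (e i) * (c • e) i = c * ∑ i, cj (e i) * e i := by
          rw [Finset.mul_sum]
          refine Finset.sum_congr rfl fun i _ => ?_
          rw [PiLp.smul_apply, smul_eq_mul]
          ring
      _ = c := by rw [show (∑ i, cj (e i) * e i) = 1 from he1, mul_one]
  have h5 : ip e (QR V e χ) = ip e χ := heRho hV he1 he χ
  have hc' : c = ip e χ := by rw [← h4, h5]
  rw [hc, hc']
  refine PiLp.ext fun i => ?_
  rw [PiLp.smul_apply, smul_eq_mul]

end Aux6

section Aux7

local notation "cj" => starRingEnd ℂ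

set_option linter.unusedSectionVars false
set_option maxHeartbeats 1000000

variable {ι : Type*} [Fintype ι] [DecidableEq ι]

lemma fix_sub {V : Matrix (ι × ι) (ι × ι) ℂ} {w1 w2 : EuclideanSpace ℂ (ι × ι)} (lam : ℂ)
    (h1 : appM V w1 = w1) (h2 : appM V w2 = w2) :
    appM V (WithLp.toLp 2 (fun j => w1 j - lam * w2 j) : EuclideanSpace ℂ (ι × ι))
      = (WithLp.toLp 2 (fun j => w1 j - lam * w2 j) : EuclideanSpace ℂ (ι × ι)) := by
  refine PiLp.ext fun q => ?_
  have e1 := cfun h1 q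
  have e2 := cfun h2 q
  rw [appM_apply] at e1 e2
  show ∑ j, V q j * (w1 j - lam * w2 j) = w1 q - lam * w2 q
  calc ∑ j, V q j * (w1 j - lam * w2 j)
      = (∑ j, V q j * w1 j) - lam * (∑ j, V q j * w2 j) := by
        rw [Finset.mul_sum, ← Finset.sum_sub_distrib]
        exact Finset.sum_congr rfl fun j _ => by ring
    _ = w1 q - lam * w2 q := by rw [e1, e2]

lemma fix_scale {V : Matrix (ι × ι) (ι × ι) ℂ} {w : EuclideanSpace ℂ (ι × ι)} (c : ℂ)
    (h : appM V w = w) :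
    appM V (WithLp.toLp 2 (fun j => c * w j) : EuclideanSpace ℂ (ι × ι))
      = (WithLp.toLp 2 (fun j => c * w j) : EuclideanSpace ℂ (ι × ι)) := by
  refine PiLp.ext fun q => ?_
  have e1 := cfun h q
  rw [appM_apply] at e1
  show ∑ j, V q j * (c * w j) = c * w q
  calc ∑ j, V q j * (c * w j) = c * ∑ j, V q j * w j := by
        rw [Finset.mul_sum]
        exact Finset.sum_congr rfl fun j _ => by ring
    _ = c * w q := by rw [e1]

/-- MAIN LEMMA: if `p` is a pre-subgroup-like unit vector with `⟨p,e⟩ ≠ 0` and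
`F ∈ H_p`, then `L_p F = ⟨p,F⟩ p`. -/
lemma main_lemma {V : Matrix (ι × ι) (ι × ι) ℂ} (hV : IsMU V) {e : EuclideanSpace ℂ ι}
    (he1 : ip e e = 1)
    (hefix : ∀ η, appM V (tens e η) = tens e η)
    (huniq : ∀ ξ, (∀ η, mact V (tens ξ η) = tens ξ η) → ∃ c : ℂ, ξ = c • e)
    {p F : EuclideanSpace ℂ ι} (hp1 : ip p p = 1) (hpe : ip p e ≠ 0)
    (hpp : appM V (tens p p) = tens p p) (hF : appM V (tens F p) = tens F p) :
    QL V p F = WithLp.toLp 2 fun i => ip p F * p i := by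
  set x := QL V p F with hx
  have hxidem : QL V p x = x := LA hV hp1 hpp F
  have hxup : appM V (tens p x) = tens p x := fix_QL hV hp1 hxidem
  have hxdn : appM V (tens x p) = tens x p := LB hV hpp hF
  have hep : ip e p ≠ 0 := by
    intro h0
    apply hpe
    rw [← ip_conj, h0, map_zero]
  set lam := ip e x / ip e p with hlam
  set y : EuclideanSpace ℂ ι := WithLp.toLp 2 (fun i => x i - lam * p i) with hy
  have hey : ip e y = 0 := by
    show ∑ i, cj (e i) * (x i - lam * p i) = 0
    have hsplit : ∑ i, cj (e i) * (x i - lam * p i) = ip e x - lam * ip e p := by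
      rw [ip, ip, Finset.mul_sum, ← Finset.sum_sub_distrib]
      exact Finset.sum_congr rfl fun i _ => by ring
    rw [hsplit, hlam, div_mul_cancel₀ _ hep, sub_self]
  have hty : tens y p = (WithLp.toLp 2 (fun j => tens x p j - lam * tens p p j) : EuclideanSpace ℂ (ι × ι)) := by
    refine PiLp.ext fun j => ?_
    show (x j.1 - lam * p j.1) * p j.2 = x j.1 * p j.2 - lam * (p j.1 * p j.2)
    ring
  have hty' : tens p y = (WithLp.toLp 2 (fun j => tens p x j - lam * tens p p j) : EuclideanSpace ℂ (ι × ι)) := by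
    refine PiLp.ext fun j => ?_
    show p j.1 * (x j.2 - lam * p j.2) = p j.1 * x j.2 - lam * (p j.1 * p j.2)
    ring
  have hydn : appM V (tens y p) = tens y p := by
    rw [hty]; exact fix_sub lam hxdn hpp
  have hyup : appM V (tens p y) = tens p y := by
    rw [hty']; exact fix_sub lam hxup hpp
  have hpx : ip p x = ip p F := ortho_QL hV hp1 hpp F
  by_cases hy0 : ∀ i, y i = 0
  · -- x = lam • p, and lam = ip p F
    have hxi : ∀ i, x i = lam * p i := by
      intro i
      have := hy0 i
      rw [hy] at this
      linear_combination this
    have hlam' : lam = ip p F := by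
      rw [← hpx]
      show _ = ∑ i, cj (p i) * x i
      calc lam = lam * ip p p := by rw [hp1, mul_one]
        _ = ∑ i, cj (p i) * x i := by
            rw [ip, Finset.mul_sum]
            refine Finset.sum_congr rfl fun i _ => ?_
            rw [hxi i]
            ring
    refine PiLp.ext fun i => ?_
    rw [hxi i, hlam']
  · -- contradiction branch
    exfalso
    have hN0 : ip y y ≠ 0 := by
      intro h0
      exact hy0 (ip_self_eq_zero h0)
    set N : ℝ := ∑ i, Complex.normSq (y i) with hNdef
    have hNy : ip y y = (N : ℂ) := ip_self_normSq y
    have hNne : N ≠ 0 := by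
      intro h0
      apply hN0
      rw [hNy, h0, Complex.ofReal_zero]
    have hNnonneg : 0 ≤ N := Finset.sum_nonneg fun i _ => Complex.normSq_nonneg _
    set n : ℝ := Real.sqrt N with hn
    have hn2 : n * n = N := Real.mul_self_sqrt hNnonneg
    have hnne : n ≠ 0 := by
      intro h0
      apply hNne
      rw [← hn2, h0, mul_zero]
    have hnCne : (n : ℂ) ≠ 0 := by exact_mod_cast hnne
    set h : EuclideanSpace ℂ ι := WithLp.toLp 2 (fun i => (n : ℂ)⁻¹ * y i) with hh
    have hcjn : cj ((n : ℂ)⁻¹) = (n : ℂ)⁻¹ := by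
      rw [map_inv₀, Complex.conj_ofReal]
    have hiph : ip h h = 1 := by
      show ∑ i, cj ((n : ℂ)⁻¹ * y i) * ((n : ℂ)⁻¹ * y i) = 1
      have hterm : ∀ i, cj ((n : ℂ)⁻¹ * y i) * ((n : ℂ)⁻¹ * y i)
          = (n : ℂ)⁻¹ * (n : ℂ)⁻¹ * (cj (y i) * y i) := by
        intro i
        rw [map_mul, hcjn]
        ring
      simp_rw [hterm]
      rw [← Finset.mul_sum]
      rw [show (∑ i, cj (y i) * y i) = ip y y from rfl, hNy]
      have hcast : (n : ℂ) * (n : ℂ) = (N : ℂ) := by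
        rw [← Complex.ofReal_mul, hn2]
      have hNCne : (N : ℂ) ≠ 0 := by exact_mod_cast hNne
      calc (n : ℂ)⁻¹ * (n : ℂ)⁻¹ * (N : ℂ)
          = ((n : ℂ) * (n : ℂ))⁻¹ * (N : ℂ) := by rw [mul_inv]
        _ = ((N : ℂ))⁻¹ * (N : ℂ) := by rw [hcast]
        _ = 1 := inv_mul_cancel₀ hNCne
    have hyy : appM V (tens y y) = tens y y := LC hV hp1 hydn hyup
    have hth : tens h h = (WithLp.toLp 2 (fun j => (n : ℂ)⁻¹ * ((n : ℂ)⁻¹ * tens y y j)) :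
        EuclideanSpace ℂ (ι × ι)) := by
      refine PiLp.ext fun j => ?_
      show ((n : ℂ)⁻¹ * y j.1) * ((n : ℂ)⁻¹ * y j.2) = (n : ℂ)⁻¹ * ((n : ℂ)⁻¹ * (y j.1 * y j.2))
      ring
    have hhh : appM V (tens h h) = tens h h := by
      rw [hth]
      exact fix_scale (w := WithLp.toLp 2 fun j => (n : ℂ)⁻¹ * tens y y j) _
        (fix_scale (w := tens y y) _ hyy)
    have hthp : tens h p = (WithLp.toLp 2 (fun j => (n : ℂ)⁻¹ * tens y p j) : EuclideanSpace ℂ (ι × ι)) := by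
      refine PiLp.ext fun j => ?_
      show ((n : ℂ)⁻¹ * y j.1) * p j.2 = (n : ℂ)⁻¹ * (y j.1 * p j.2)
      ring
    have hhp : appM V (tens h p) = tens h p := by
      rw [hthp]
      exact fix_scale (w := tens y p) _ hydn
    have heh : ip e h = 0 := by
      show ∑ i, cj (e i) * ((n : ℂ)⁻¹ * y i) = 0
      have : ∑ i, cj (e i) * ((n : ℂ)⁻¹ * y i) = (n : ℂ)⁻¹ * ip e y := by
        rw [ip, Finset.mul_sum]
        exact Finset.sum_congr rfl fun i _ => by ring
      rw [this, hey, mul_zero]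
    have hQhe0 : ip e (QL V h e) = 0 := by
      calc ip e (QL V h e) = ip (tens h e) (appM V (tens h e)) := by
            rw [QL, ← ip_tens_left]
        _ = ip h (QR V e h) := by rw [ip_tens_right, QR]
        _ = ip e h * ip h e := by
            rw [R1 hV he1 hefix huniq h]
            show ∑ i, cj (h i) * (ip e h * e i) = _
            rw [show ip e h * ip h e = ip e h * ∑ i, cj (h i) * e i from rfl, Finset.mul_sum]
            exact Finset.sum_congr rfl fun i _ => by ring
        _ = 0 := by rw [heh, zero_mul]
    have hQheH : QL V h (QL V h e) = QL V h e := LA hV hiph hhh e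
    have hQheUp : appM V (tens h (QL V h e)) = tens h (QL V h e) := fix_QL hV hiph hQheH
    have hQhe_zero : ∀ i, QL V h e i = 0 := by
      apply ip_self_eq_zero
      have horth := ortho_QL hV hiph hQheUp e
      rw [horth, ← ip_conj, hQhe0, map_zero]
    have contr : ip p e = 0 := by
      have horth := ortho_QL hV hiph hhp e
      rw [← horth]
      show ∑ i, cj (p i) * QL V h e i = 0
      exact Finset.sum_eq_zero fun i _ => by rw [hQhe_zero i, mul_zero]
    exact hpe contr

lemma Lslice_eq (V : Matrix (ι × ι) (ι × ι) ℂ) (g χ : EuclideanSpace ℂ ι) :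
    appM (Lslice V g g) χ = QL V g χ := by
  refine PiLp.ext fun a => ?_
  show ∑ b, (∑ x, ∑ y, cj (g x) * g y * V (x, a) (y, b)) * χ b
      = ∑ x, cj (g x) * appM V (tens g χ) (x, a)
  have hrhs : ∀ x : ι, cj (g x) * appM V (tens g χ) (x, a)
      = ∑ y, ∑ b, cj (g x) * (V (x, a) (y, b) * (g y * χ b)) := by
    intro x
    rw [appM_tens, Finset.mul_sum]
    refine Finset.sum_congr rfl fun y _ => ?_
    rw [Finset.mul_sum]
  simp_rw [hrhs]
  calc ∑ b, (∑ x, ∑ y, cj (g x) * g y * V (x, a) (y, b)) * χ b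
      = ∑ b, ∑ x, ∑ y, cj (g x) * g y * V (x, a) (y, b) * χ b := by
        refine Finset.sum_congr rfl fun b _ => ?_
        rw [Finset.sum_mul]
        refine Finset.sum_congr rfl fun x _ => ?_
        rw [Finset.sum_mul]
    _ = ∑ x, ∑ b, ∑ y, cj (g x) * g y * V (x, a) (y, b) * χ b := Finset.sum_comm
    _ = ∑ x, ∑ y, ∑ b, cj (g x) * g y * V (x, a) (y, b) * χ b :=
        Finset.sum_congr rfl fun x _ => Finset.sum_comm
    _ = ∑ x, ∑ y, ∑ b, cj (g x) * (V (x, a) (y, b) * (g y * χ b)) :=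
        Finset.sum_congr rfl fun x _ => Finset.sum_congr rfl fun y _ =>
          Finset.sum_congr rfl fun b _ => by ring

end Aux7


/-- if `g ≺ f` then `L_g f = ⟨g,f⟩ g` and `⟨g,e⟩ = ⟨g,f⟩⟨f,e⟩`. -/
theorem Lslice_apply_of_prec {ι : Type*} [Fintype ι] [DecidableEq ι] [Nonempty ι]
    (V : Matrix (ι × ι) (ι × ι) ℂ) (hV : IsMU V)
    (e eHat : EuclideanSpace ℂ ι) (hm : Mult1 V e eHat)
    (f g : EuclideanSpace ℂ ι) (hf : IsPreSubgroup V e f) (hg : IsPreSubgroup V e g)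
    (hgf : mact V (tens f g) = tens f g) :
    appM (Lslice V g g) f = ⟪g, f⟫_ℂ • g ∧ ⟪g, e⟫_ℂ = ⟪g, f⟫_ℂ * ⟪f, e⟫_ℂ := by
  have ip_one : ∀ z : EuclideanSpace ℂ ι, ‖z‖ = 1 → ip z z = 1 := by
    intro z hz
    rw [← inner_eq_ip, inner_self_eq_norm_sq_to_K, hz]
    norm_num
  have he1 : ip e e = 1 := ip_one e hm.1
  have hg1 : ip g g = 1 := ip_one g hg.1
  have hf1 : ip f f = 1 := ip_one f hf.1
  have hefix : ∀ η, appM V (tens e η) = tens e η := fun η => hm.2.2.1 η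
  have huniq : ∀ ξ, (∀ η, mact V (tens ξ η) = tens ξ η) → ∃ c : ℂ, ξ = c • e :=
    hm.2.2.2.2.1
  have hge : ip g e ≠ 0 := by
    rw [← inner_eq_ip]
    exact (hg.2.1).ne'
  have hfe : ip f e ≠ 0 := by
    rw [← inner_eq_ip]
    exact (hf.2.1).ne'
  have hgg : appM V (tens g g) = tens g g := hg.2.2
  have hff : appM V (tens f f) = tens f f := hf.2.2
  have hfg : appM V (tens f g) = tens f g := hgf
  constructor
  · have h1 : QL V g f = WithLp.toLp 2 fun i => ip g f * g i :=
      main_lemma hV he1 hefix huniq hg1 hge hgg hfg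
    rw [Lslice_eq, h1, inner_eq_ip]
    refine PiLp.ext fun i => ?_
    rw [PiLp.smul_apply, smul_eq_mul]
  · have hef : appM V (tens e f) = tens e f := hefix f
    have h1 : QL V f e = WithLp.toLp 2 fun i => ip f e * f i :=
      main_lemma hV he1 hefix huniq hf1 hfe hff hef
    have h2 : ip g (QL V f e) = ip g e := ortho_QL hV hf1 hfg e
    rw [inner_eq_ip, inner_eq_ip, inner_eq_ip, ← h2, h1]
    show ∑ i, (starRingEnd ℂ) (g i) * (ip f e * f i) = ip g f * ip f e
    calc ∑ i, (starRingEnd ℂ) (g i) * (ip f e * f i) = ip f e * ∑ i, (starRingEnd ℂ) (g i) * f i := by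
          rw [Finset.mul_sum]
          exact Finset.sum_congr rfl fun i _ => by ring
      _ = ip g f * ip f e := by rw [mul_comm]; rfl

end MU
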